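/- On the unit sphere S³ = {|z|=1} ⊂ C², the tangential Dirac operator ∂̸ = [[−θ/2, e₊],[−e₋, θ/2]] satisfies ∂̸ φ^{+(m,l,k)} = (m/2) φ^{+(m,l,k)}, i.e. the spinors φ^{+(m,l,k)} are eigenspinors with eigenvalue m/2. -/

import Mathlib

open MvPolynomial

/- Variables: index 0 ↦ z₁, 1 ↦ z₂, 2 ↦ z̄₁, 3 ↦ z̄₂ in `ℂ[z₁, z₂, z̄₁, z̄₂]`. -/

/-- `e₊ = -z₂ ∂/∂z̄₁ + z₁ ∂/∂z̄₂`. -/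
noncomputable def ePlus : Derivation ℂ (MvPolynomial (Fin 4) ℂ) (MvPolynomial (Fin 4) ℂ) :=
  mkDerivation ℂ ![0, 0, -(X 1), X 0]

/-- `e₋ = -z̄₂ ∂/∂z₁ + z̄₁ ∂/∂z₂`. -/
noncomputable def eMinus : Derivation ℂ (MvPolynomial (Fin 4) ℂ) (MvPolynomial (Fin 4) ℂ) :=
  mkDerivation ℂ ![-(X 3), X 2, 0, 0]

/-- `θ = z₁ ∂/∂z₁ + z₂ ∂/∂z₂ - z̄₁ ∂/∂z̄₁ - z̄₂ ∂/∂z̄₂`. -/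
noncomputable def thetaD : Derivation ℂ (MvPolynomial (Fin 4) ℂ) (MvPolynomial (Fin 4) ℂ) :=
  mkDerivation ℂ ![X 0, X 1, -(X 2), -(X 3)]

/-- `v^k_{(l, m-l)} = (e₋)^k (z₁^l z₂^{m-l})`. -/
noncomputable def v (m l k : ℕ) : MvPolynomial (Fin 4) ℂ :=
  (fun p => eMinus p)^[k] (X 0 ^ l * X 1 ^ (m - l))

lemma v_succ (m l k : ℕ) : v m l (k + 1) = eMinus (v m l k) := by
  simp [v, Function.iterate_succ_apply']

lemma v_zero (m l : ℕ) : v m l 0 = X 0 ^ l * X 1 ^ (m - l) := rfl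

/-- `⁅θ, e₋⁆ = -2 e₋`. -/
lemma bracket_theta_eMinus : ⁅thetaD, eMinus⁆ = (-2 : ℂ) • eMinus := by
  apply derivation_ext
  intro i
  fin_cases i <;>
    simp [Derivation.commutator_apply, Derivation.smul_apply, thetaD, eMinus,
      mkDerivation_X, two_smul] <;> ring

/-- `⁅e₊, e₋⁆ = -θ`. -/
lemma bracket_ePlus_eMinus : ⁅ePlus, eMinus⁆ = -thetaD := by
  apply derivation_ext
  intro i
  fin_cases i <;>
    simp [Derivation.commutator_apply, thetaD, eMinus, ePlus, mkDerivation_X]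

lemma theta_comm (p : MvPolynomial (Fin 4) ℂ) :
    thetaD (eMinus p) = eMinus (thetaD p) + (-2 : ℂ) • eMinus p := by
  have h := congrArg (fun D => Derivation.toLinearMap D p) bracket_theta_eMinus
  have h' : thetaD (eMinus p) - eMinus (thetaD p) = (-2 : ℂ) • eMinus p := h
  linear_combination (norm := module) h'

lemma ePlus_comm (p : MvPolynomial (Fin 4) ℂ) :
    ePlus (eMinus p) = eMinus (ePlus p) - thetaD p := by
  have h := congrArg (fun D => Derivation.toLinearMap D p) bracket_ePlus_eMinus
  have h' : ePlus (eMinus p) - eMinus (ePlus p) = -thetaD p := h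
  linear_combination (norm := module) h'

lemma eig_pow (D : Derivation ℂ (MvPolynomial (Fin 4) ℂ) (MvPolynomial (Fin 4) ℂ))
    (p : MvPolynomial (Fin 4) ℂ) (c : ℂ) (h : D p = c • p) (n : ℕ) :
    D (p ^ n) = ((n : ℂ) * c) • p ^ n := by
  induction n with
  | zero => simp
  | succ n ih =>
      rw [pow_succ, Derivation.leibniz, h, ih]
      simp only [smul_eq_mul, mul_smul_comm, ← pow_succ, ← pow_succ']
      push_cast
      match_scalars <;> ring

lemma ePlus_v_zero (m l : ℕ) : ePlus (v m l 0) = 0 := by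
  have h0 : ePlus (X (0 : Fin 4)) = (0 : ℂ) • X (0 : Fin 4) := by
    simp [ePlus, mkDerivation_X]
  have h1 : ePlus (X (1 : Fin 4)) = (0 : ℂ) • X (1 : Fin 4) := by
    simp [ePlus, mkDerivation_X]
  rw [v_zero, Derivation.leibniz, eig_pow _ _ _ h0, eig_pow _ _ _ h1]
  simp

lemma theta_v_zero (m l : ℕ) (hl : l ≤ m) : thetaD (v m l 0) = (m : ℂ) • v m l 0 := by
  have h0 : thetaD (X (0 : Fin 4)) = (1 : ℂ) • X (0 : Fin 4) := by
    simp [thetaD, mkDerivation_X]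
  have h1 : thetaD (X (1 : Fin 4)) = (1 : ℂ) • X (1 : Fin 4) := by
    simp [thetaD, mkDerivation_X]
  rw [v_zero, Derivation.leibniz, eig_pow _ _ _ h0, eig_pow _ _ _ h1]
  have : ((m - l : ℕ) : ℂ) = (m : ℂ) - l := by
    rw [Nat.cast_sub hl]
  simp only [smul_eq_mul, mul_smul_comm]
  rw [mul_comm (X (1 : Fin 4) ^ (m - l)) (X (0 : Fin 4) ^ l), this]
  match_scalars <;> ring

lemma theta_v (m l : ℕ) (hl : l ≤ m) (k : ℕ) :
    thetaD (v m l k) = ((m : ℂ) - 2 * k) • v m l k := by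
  induction k with
  | zero => simpa using theta_v_zero m l hl
  | succ k ih =>
      rw [v_succ, theta_comm, ih, Derivation.map_smul, ← v_succ]
      push_cast
      match_scalars <;> ring

lemma ePlus_v (m l : ℕ) (hl : l ≤ m) (k : ℕ) :
    ePlus (v m l (k + 1)) = (-((k : ℂ) + 1) * ((m : ℂ) - k)) • v m l k := by
  induction k with
  | zero =>
      rw [v_succ, ePlus_comm, ePlus_v_zero, theta_v_zero m l hl, map_zero, zero_sub]
      push_cast
      match_scalars <;> ring
  | succ k ih =>
      rw [v_succ, ePlus_comm, ih, theta_v m l hl, Derivation.map_smul, ← v_succ]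
      push_cast
      match_scalars <;> ring

/-- The spinor `φ^{+(m,l,k)} = (k v^{k-1}, -v^k)` is an eigenspinor of the tangential
Dirac operator `∂̸ = [[-θ/2, e₊], [-e₋, θ/2]]` with eigenvalue `m/2`:
`∂̸ φ^{+(m,l,k)} = (m/2) φ^{+(m,l,k)}` (componentwise, as an algebraic identity). -/
theorem phiPlus_eigenspinor (m l k : ℕ) (hl : l ≤ m) (hk : k ≤ m + 1) :
    ((-(1 / 2 : ℂ)) • thetaD ((k : ℂ) • v m l (k - 1)) + ePlus (-(v m l k))
        = ((m : ℂ) / 2) • ((k : ℂ) • v m l (k - 1))) ∧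
    (-(eMinus ((k : ℂ) • v m l (k - 1))) + (1 / 2 : ℂ) • thetaD (-(v m l k))
        = ((m : ℂ) / 2) • (-(v m l k))) := by
  match k with
  | 0 =>
      constructor
      · simp [ePlus_v_zero]
      · simp only [Nat.cast_zero, zero_smul, map_zero, neg_zero, zero_add, map_neg,
          theta_v m l hl 0]
        push_cast
        match_scalars <;> ring
  | (k' + 1) =>
      have hv1 : v m l (k' + 1 - 1) = v m l k' := rfl
      constructor
      · rw [hv1, Derivation.map_smul, theta_v m l hl k', map_neg, ePlus_v m l hl k']
        push_cast
        match_scalars <;> ring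
      · rw [hv1, Derivation.map_smul, ← v_succ, map_neg, theta_v m l hl (k' + 1)]
        push_cast
        match_scalars <;> ring
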